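/- Let (Ω, S) be a minimal aperiodic subshift, V a linear map, and u, v ∈ Ω with V·W(u) bounded. Then V·W(v) is also bounded, the map φ_v (defined from base point v) is well-defined, and φ_u − φ_v is the constant function with value φ_u(v). -/

import Mathlib

/-- Abelianization of `u_{[0,n)}` for a bi-infinite word `u : ℤ → A`, with the
convention `ab(u_{[0,n)}) = -ab(u_{[-n,0)})` for `n < 0`. -/
def abPrefix {A : Type*} [DecidableEq A] (u : ℤ → A) (n : ℤ) : A → ℤ := fun a =>
  if 0 ≤ n then (((Finset.range n.toNat).filter (fun i : ℕ => u (i : ℤ) = a)).card : ℤ)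
  else -((((Finset.range (-n).toNat).filter (fun i : ℕ => u (-((i : ℤ) + 1)) = a)).card : ℤ))

lemma abPrefix_succ {A : Type*} [DecidableEq A] (u : ℤ → A) (n : ℤ) (a : A) :
    abPrefix u (n + 1) a = abPrefix u n a + (if u n = a then 1 else 0) := by
  unfold abPrefix
  rcases lt_trichotomy n (-1) with h | h | h
  · have h1 : ¬ (0:ℤ) ≤ n + 1 := by omega
    have h0 : ¬ (0:ℤ) ≤ n := by omega
    rw [if_neg h1, if_neg h0]
    have hM : (-n).toNat = (-(n+1)).toNat + 1 := by omega
    rw [hM, Finset.card_filter, Finset.card_filter, Finset.sum_range_succ]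
    have hc : (((-(n+1)).toNat : ℤ)) = -(n+1) := Int.toNat_of_nonneg (by omega)
    have : -((((-(n+1)).toNat : ℤ)) + 1) = n := by omega
    rw [this]
    split_ifs <;> push_cast <;> ring
  · subst h
    norm_num
    simp [Finset.range_one, Finset.filter_singleton]
    split_ifs with h1 h2 h2 <;> simp_all <;> omega
  · have h0 : (0:ℤ) ≤ n := by omega
    have h1 : (0:ℤ) ≤ n + 1 := by omega
    rw [if_pos h1, if_pos h0]
    have hM : (n+1).toNat = n.toNat + 1 := by omega
    rw [hM, Finset.card_filter, Finset.card_filter, Finset.sum_range_succ]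
    have : ((n.toNat : ℤ)) = n := Int.toNat_of_nonneg h0
    rw [this]
    split_ifs <;> push_cast <;> ring

lemma abPrefix_shift {A : Type*} [DecidableEq A] (u : ℤ → A) (m n : ℤ) (a : A) :
    abPrefix (fun i => u (i + m)) n a = abPrefix u (m + n) a - abPrefix u m a := by
  induction n using Int.induction_on with
  | zero => simp [abPrefix]
  | succ k ih =>
      have h1 := abPrefix_succ (fun i => u (i + m)) k a
      have h2 := abPrefix_succ u (m + k) a
      have e : m + (k + 1) = (m + k) + 1 := by ring
      rw [e]
      have e2 : (k : ℤ) + m = m + k := by ring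
      rw [e2] at h1
      omega
  | pred k ih =>
      rw [show (-(k:ℤ) - 1) = -((k:ℤ)+1) from by ring]
      have h1 := abPrefix_succ (fun i => u (i + m)) (-(k+1)) a
      have h2 := abPrefix_succ u (m + -(k+1)) a
      have e : (-(k+1) : ℤ) + 1 = -k := by ring
      rw [e] at h1
      have e2 : (m + -(k+1) : ℤ) + 1 = m + -k := by ring
      rw [e2] at h2
      have e3 : (-(k+1) : ℤ) + m = m + -(k+1) := by ring
      rw [e3] at h1
      omega

lemma abPrefix_cont {A : Type*} [DecidableEq A] [TopologicalSpace A] [DiscreteTopology A]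
    (n : ℤ) (a : A) : Continuous fun w : ℤ → A => abPrefix w n a := by
  have key : ∀ (N : ℕ) (g : ℕ → ℤ),
      Continuous fun w : ℤ → A =>
        ((((Finset.range N).filter (fun i : ℕ => w (g i) = a)).card : ℤ)) := by
    intro N g
    have h1 : Continuous fun w : ℤ → A =>
        (((Finset.range N).filter (fun i : ℕ => w (g i) = a)).card) := by
      simp only [Finset.card_filter]
      apply continuous_finset_sum
      intro i _
      exact (continuous_of_discreteTopology
        (f := fun x : A => if x = a then (1:ℕ) else 0)).comp (continuous_apply (g i))
    exact (continuous_of_discreteTopology (f := (Nat.cast : ℕ → ℤ))).comp h1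
  unfold abPrefix
  by_cases h : 0 ≤ n
  · simp only [if_pos h]; exact key _ _
  · simp only [if_neg h]; exact (key _ _).neg

theorem stmt_17 {A : Type*} [Fintype A] [DecidableEq A]
    [TopologicalSpace A] [DiscreteTopology A] {d : ℕ}
    (Ω : Set (ℤ → A)) (hclosed : IsClosed Ω)
    (hinv : (fun x : ℤ → A => fun i => x (i + 1)) '' Ω = Ω)
    (hmin : ∀ x ∈ Ω, ∀ y ∈ Ω, y ∈ closure {z : ℤ → A | ∃ n : ℤ, z = fun i => x (i + n)})
    (haper : ∀ x ∈ Ω, ∀ n : ℤ, (fun i => x (i + n)) = x → n = 0)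
    (V : (A → ℝ) →ₗ[ℝ] (Fin d → ℝ)) (u : ℤ → A) (hu : u ∈ Ω) (v : ℤ → A) (hv : v ∈ Ω)
    (hbdd : Bornology.IsBounded
      (Set.range fun n : ℤ => V fun a => (abPrefix u n a : ℝ)))
    (φu : (ℤ → A) → (Fin d → ℝ)) (hcontu : ContinuousOn φu Ω)
    (hφu : ∀ n : ℤ, φu (fun i => u (i + n)) = V fun a => (abPrefix u n a : ℝ)) :
    Bornology.IsBounded (Set.range fun n : ℤ => V fun a => (abPrefix v n a : ℝ)) ∧
    ∃ φv : (ℤ → A) → (Fin d → ℝ), ContinuousOn φv Ω ∧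
      (∀ n : ℤ, φv (fun i => v (i + n)) = V fun a => (abPrefix v n a : ℝ)) ∧
      ∀ w ∈ Ω, φu w - φv w = φu v := by
  -- continuity of V
  have hVc : Continuous V := V.continuous_of_finiteDimensional
  have hcontab : ∀ n : ℤ, Continuous fun w : ℤ → A => (V fun a => (abPrefix w n a : ℝ)) := by
    intro n
    exact hVc.comp (continuous_pi fun a =>
      (continuous_of_discreteTopology (f := (Int.cast : ℤ → ℝ))).comp (abPrefix_cont n a))
  -- shift maps
  have hTcont : ∀ n : ℤ, Continuous fun w : ℤ → A => (fun i => w (i + n)) := by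
    intro n; exact continuous_pi fun i => continuous_apply (i + n)
  have hTmem : ∀ n : ℤ, ∀ w ∈ Ω, (fun i => w (i + n)) ∈ Ω := by
    intro n
    induction n using Int.induction_on with
    | zero => intro w hw; simpa using hw
    | succ k ih =>
        intro w hw
        have h1 : (fun i => w (i + ((k:ℤ)+1))) = (fun i => (fun j => w (j + (k:ℤ))) (i + 1)) := by
          funext i; simp only; congr 1; ring
        rw [h1, ← hinv]
        exact ⟨_, ih w hw, rfl⟩
    | pred k ih =>
        intro w hw
        have hmem : (fun i => w (i + -(k:ℤ))) ∈ Ω := ih w hw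
        rw [← hinv] at hmem
        obtain ⟨x, hx, hxe⟩ := hmem
        have h2 : (fun i => w (i + (-(k:ℤ) - 1))) = x := by
          funext i
          have h3 := congrFun hxe (i - 1)
          simp only at h3
          have e1 : i - 1 + 1 = i := by ring
          have e2 : i - 1 + -(k:ℤ) = i + (-(k:ℤ) - 1) := by ring
          rw [e1, e2] at h3
          exact h3.symm
        rw [h2]; exact hx
  -- orbit of u
  set O : Set (ℤ → A) := {z : ℤ → A | ∃ m : ℤ, z = fun i => u (i + m)} with hO
  have horb : O ⊆ Ω := by rintro z ⟨m, rfl⟩; exact hTmem m u hu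
  -- cocycle identity on the closure of the orbit
  have key : ∀ (n : ℤ) (w : ℤ → A), w ∈ closure O →
      φu (fun i => w (i + n)) - φu w = V fun a => (abPrefix w n a : ℝ) := by
    intro n
    set f : (ℤ → A) → (Fin d → ℝ) := fun w =>
      φu (fun i => w (i + n)) - φu w - V (fun a => (abPrefix w n a : ℝ)) with hf
    have hfcont : ContinuousOn f Ω :=
      ((hcontu.comp (hTcont n).continuousOn (fun w hw => hTmem n w hw)).sub hcontu).sub
        (hcontab n).continuousOn
    have hC : IsClosed (Ω ∩ f ⁻¹' {0}) :=
      hfcont.preimage_isClosed_of_isClosed hclosed isClosed_singleton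
    have hsub : O ⊆ Ω ∩ f ⁻¹' {0} := by
      rintro z ⟨m, rfl⟩
      refine ⟨hTmem m u hu, ?_⟩
      simp only [Set.mem_preimage, Set.mem_singleton_iff, hf]
      have h1 : (fun i => (fun j => u (j + m)) (i + n)) = (fun i => u (i + (m + n))) := by
        funext i; simp only; congr 1; ring
      rw [h1, hφu (m + n), hφu m]
      have h3 : (fun a => (abPrefix (fun i => u (i + m)) n a : ℝ)) =
          (fun a => (abPrefix u (m + n) a : ℝ)) - (fun a => (abPrefix u m a : ℝ)) := by
        funext a
        have := abPrefix_shift u m n a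
        simp only [Pi.sub_apply, this]
        push_cast
        ring
      rw [h3, map_sub]
      abel
    intro w hw
    have hwC := closure_minimal hsub hC hw
    have := hwC.2
    simp only [Set.mem_preimage, Set.mem_singleton_iff, hf] at this
    exact sub_eq_zero.mp this
  have hvkey : ∀ n : ℤ, φu (fun i => v (i + n)) - φu v = V fun a => (abPrefix v n a : ℝ) :=
    fun n => key n v (hmin u hu v hv)
  constructor
  · -- boundedness
    have hΩcomp : IsCompact Ω := hclosed.isCompact
    have himg : Bornology.IsBounded (φu '' Ω) := (hΩcomp.image_of_continuousOn hcontu).isBounded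
    have hK : IsCompact ((fun x : Fin d → ℝ => x - φu v) '' (φu '' Ω)) :=
      (hΩcomp.image_of_continuousOn hcontu).image (continuous_id.sub continuous_const)
    have hsub2 : Set.range (fun n : ℤ => V fun a => (abPrefix v n a : ℝ)) ⊆
        (fun x : Fin d → ℝ => x - φu v) '' (φu '' Ω) := by
      rintro x ⟨n, rfl⟩
      exact ⟨φu (fun i => v (i + n)), ⟨_, hTmem n v hv, rfl⟩, hvkey n⟩
    exact hK.isBounded.subset hsub2
  · refine ⟨fun w => φu w - φu v, hcontu.sub continuousOn_const, ?_, ?_⟩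
    · intro n; exact hvkey n
    · intro w hw; exact sub_sub_cancel _ _
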